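/- For all k ≥ 0, s(3·2^(2k) − 1) = 3·2^k and s(3·2^(2k+1) − 1) = 2^(k+2). -/
import Mathlib


def rs : ℕ → ℤ
  | 0 => 1
  | (n+1) =>
    if (n+1) % 2 = 0 then rs ((n+1)/2)
    else (-1)^((n+1)/2) * rs ((n+1)/2)
decreasing_by all_goals exact Nat.div_lt_self (Nat.succ_pos n) (by norm_num)

def s (n : ℕ) : ℤ := ∑ i ∈ Finset.range (n+1), rs i

def t (n : ℕ) : ℤ := ∑ i ∈ Finset.range (n+1), (-1)^i * rs i

lemma rs_even (n : ℕ) : rs (2*n) = rs n := by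
  cases n with
  | zero => rfl
  | succ m =>
    show rs ((2*m+1)+1) = rs (m+1)
    rw [rs]
    have h1 : (2*m+1+1) % 2 = 0 := by omega
    have h2 : (2*m+1+1) / 2 = m+1 := by omega
    simp [h1, h2]

lemma rs_odd (n : ℕ) : rs (2*n+1) = (-1)^n * rs n := by
  show rs ((2*n)+1) = _
  rw [rs]
  have h1 : (2*n+1) % 2 = 1 := by omega
  have h2 : (2*n+1) / 2 = n := by omega
  simp [h1, h2]

lemma s_succ (n : ℕ) : s (n+1) = s n + rs (n+1) := by
  simp [s, Finset.sum_range_succ]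

lemma t_succ (n : ℕ) : t (n+1) = t n + (-1)^(n+1) * rs (n+1) := by
  simp [t, Finset.sum_range_succ]

lemma st_double (n : ℕ) : s (2*n+1) = s n + t n ∧ t (2*n+1) = s n - t n := by
  induction n with
  | zero =>
    constructor <;> simp [s, t, Finset.sum_range_succ] <;> rw [show (1:ℕ) = 2*0+1 from rfl, rs_odd] <;> simp
  | succ m ih =>
    obtain ⟨hs, ht⟩ := ih
    have e1 : 2*(m+1)+1 = (2*m+1)+1+1 := by ring
    have e2 : (2*m+1)+1 = 2*(m+1) := by ring
    constructor
    · rw [e1, s_succ, s_succ, e2, rs_even, show 2*(m+1)+1 = 2*(m+1)+1 from rfl, rs_odd,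
        hs, s_succ, t_succ]
      ring
    · rw [e1, t_succ, t_succ, e2, rs_even, rs_odd, ht, s_succ, t_succ]
      have : ((-1:ℤ))^(2*(m+1)) = 1 := by
        rw [pow_mul]; simp
      rw [this]
      have : ((-1:ℤ))^(2*(m+1)+1) = -1 := by
        rw [pow_succ, pow_mul]; simp
      rw [this]
      ring

lemma key_step (m : ℕ) :
    s (3 * 2^(m+1) - 1) = s (3 * 2^m - 1) + t (3 * 2^m - 1) ∧
    t (3 * 2^(m+1) - 1) = s (3 * 2^m - 1) - t (3 * 2^m - 1) := by
  have h : 3 * 2^(m+1) - 1 = 2 * (3 * 2^m - 1) + 1 := by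
    have : 1 ≤ 3 * 2^m := Nat.one_le_iff_ne_zero.mpr (by positivity)
    have : 3 * 2^(m+1) = 2 * (3 * 2^m) := by ring
    omega
  rw [h]
  exact st_double _

lemma main (k : ℕ) :
    (s (3 * 2^(2*k) - 1) = 3 * 2^k ∧ t (3 * 2^(2*k) - 1) = 2^k) := by
  induction k with
  | zero =>
    constructor <;> simp [s, t, Finset.sum_range_succ] <;>
      rw [show (1:ℕ) = 2*0+1 from rfl, rs_odd, show (2:ℕ) = 2*1 from rfl, rs_even,
        show (1:ℕ) = 2*0+1 from rfl, rs_odd] <;> simp [rs]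
  | succ k ih =>
    obtain ⟨hs, ht⟩ := ih
    obtain ⟨hs1, ht1⟩ := key_step (2*k)
    rw [hs, ht] at hs1 ht1
    obtain ⟨hs2, ht2⟩ := key_step (2*k+1)
    rw [hs1, ht1] at hs2 ht2
    have e : 2*(k+1) = 2*k+1+1 := by ring
    rw [e, hs2, ht2]
    constructor <;> ring

theorem stmt14 : ∀ k : ℕ,
    s (3 * 2^(2*k) - 1) = 3 * 2^k ∧ s (3 * 2^(2*k+1) - 1) = 2^(k+2) := by
  intro k
  obtain ⟨hs, ht⟩ := main k
  obtain ⟨hs1, _⟩ := key_step (2*k)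
  rw [hs, ht] at hs1
  refine ⟨hs, ?_⟩
  rw [hs1]; ring
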